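/- arXiv:1806.08580 — 2 statements merged into one kernel-verified Lean document; each statement's English description precedes it below -/
import Mathlib

section
/- Let L = L₀ ⊕ L₁ be a finite-dimensional real ℤ₂-graded Lie algebra and let L^{-1} be the Lie algebra with the same underlying vector space and bracket twisted by -1 on [L₁,L₁] (i.e. [u,v]^{-1} = -[u,v] for u,v ∈ L₁, unchanged otherwise). Then sign(κ_L) + sign(κ_{L^{-1}}) = 2·sign(κ_L|_{L₀}), where sign denotes the signature of the symmetric bilinear form. -/
open LieAlgebra Module

/-- A real symmetric bilinear form `B` has signature `s` if, relative to some orthogonal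
basis, the number of positive diagonal entries minus the number of negative diagonal entries
equals `s`. -/
def IsSignature {V : Type*} [AddCommGroup V] [Module ℝ V]
    (B : LinearMap.BilinForm ℝ V) (s : ℤ) : Prop :=
  ∃ (n : ℕ) (b : Basis (Fin n) ℝ V),
    (∀ i j, i ≠ j → B (b i) (b j) = 0) ∧
    (s : ℝ) = ∑ i, Real.sign (B (b i) (b i))


open LieAlgebra Module Finset

section SignAux

variable {V : Type*} [AddCommGroup V] [Module ℝ V]

lemma bilin_apply_self_sum {ι : Type*} [Fintype ι] [DecidableEq ι]
    (B : LinearMap.BilinForm ℝ V) (b : Basis ι ℝ V)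
    (hb : ∀ i j, i ≠ j → B (b i) (b j) = 0) (v : V) :
    B v v = ∑ i, b.repr v i * b.repr v i * B (b i) (b i) := by
  conv_lhs => rw [← b.sum_repr v]
  simp only [map_sum, map_smul, LinearMap.sum_apply, LinearMap.smul_apply, smul_eq_mul]
  refine Finset.sum_congr rfl fun i _ => ?_
  rw [Finset.mul_sum, Finset.sum_eq_single i]
  · ring
  · intro j _ hji
    rw [hb j i hji]
    ring
  · simp

lemma posCard_le [FiniteDimensional ℝ V] (B : LinearMap.BilinForm ℝ V)
    {ι ι' : Type*} [Fintype ι] [Fintype ι'] [DecidableEq ι] [DecidableEq ι']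
    (b : Basis ι ℝ V) (c : Basis ι' ℝ V)
    (hb : ∀ i j, i ≠ j → B (b i) (b j) = 0) (hc : ∀ i j, i ≠ j → B (c i) (c j) = 0) :
    (univ.filter fun i => 0 < B (c i) (c i)).card ≤
      (univ.filter fun i => 0 < B (b i) (b i)).card := by
  set Q := univ.filter fun i => 0 < B (c i) (c i) with hQ
  set P := univ.filter fun i => 0 < B (b i) (b i) with hP
  set Pc := univ.filter fun i => ¬ 0 < B (b i) (b i) with hPc
  set W := Submodule.span ℝ ((c : ι' → V) '' ↑Q) with hW
  set W' := Submodule.span ℝ ((b : ι → V) '' ↑Pc) with hW'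
  have hWpos : ∀ v ∈ W, v ≠ 0 → 0 < B v v := by
    intro v hv hv0
    have hsupp : ↑(c.repr v).support ⊆ (↑Q : Set ι') := (Basis.mem_span_image _).mp hv
    rw [bilin_apply_self_sum B c hc v]
    apply Finset.sum_pos'
    · intro i _
      by_cases hiQ : i ∈ Q
      · exact mul_nonneg (mul_self_nonneg _) (Finset.mem_filter.mp hiQ).2.le
      · have : c.repr v i = 0 := by
          by_contra h
          exact hiQ (hsupp (Finsupp.mem_support_iff.mpr h))
        simp [this]
    · obtain ⟨i, hi⟩ : ∃ i, c.repr v i ≠ 0 := by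
        by_contra h
        push_neg at h
        exact hv0 (c.repr.map_eq_zero_iff.mp (Finsupp.ext h))
      have hiQ : i ∈ Q := hsupp (Finsupp.mem_support_iff.mpr hi)
      exact ⟨i, Finset.mem_univ i,
        mul_pos (mul_self_pos.mpr hi) (Finset.mem_filter.mp hiQ).2⟩
  have hW'nonpos : ∀ v ∈ W', B v v ≤ 0 := by
    intro v hv
    have hsupp : ↑(b.repr v).support ⊆ (↑Pc : Set ι) := (Basis.mem_span_image _).mp hv
    rw [bilin_apply_self_sum B b hb v]
    apply Finset.sum_nonpos
    intro i _
    by_cases hiP : i ∈ Pc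
    · exact mul_nonpos_of_nonneg_of_nonpos (mul_self_nonneg _)
        (not_lt.mp (Finset.mem_filter.mp hiP).2)
    · have : b.repr v i = 0 := by
        by_contra h
        exact hiP (hsupp (Finsupp.mem_support_iff.mpr h))
      simp [this]
  have hdisj : Disjoint W W' := by
    rw [Submodule.disjoint_def]
    intro x hxW hxW'
    by_contra hx0
    exact absurd (hW'nonpos x hxW') (not_le.mpr (hWpos x hxW hx0))
  have hrW : finrank ℝ W = Q.card := by
    have hli : LinearIndependent ℝ (fun i : {x // x ∈ Q} => c i) :=
      c.linearIndependent.comp Subtype.val Subtype.val_injective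
    have heq : W = Submodule.span ℝ (Set.range fun i : {x // x ∈ Q} => c i) := by
      rw [hW]; congr 1; exact (Set.image_eq_range _ _)
    rw [heq, finrank_span_eq_card hli, Fintype.card_coe]
  have hrW' : finrank ℝ W' = Pc.card := by
    have hli : LinearIndependent ℝ (fun i : {x // x ∈ Pc} => b i) :=
      b.linearIndependent.comp Subtype.val Subtype.val_injective
    have heq : W' = Submodule.span ℝ (Set.range fun i : {x // x ∈ Pc} => b i) := by
      rw [hW']; congr 1; exact (Set.image_eq_range _ _)
    rw [heq, finrank_span_eq_card hli, Fintype.card_coe]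
  have hsum := Submodule.finrank_sup_add_finrank_inf_eq W W'
  rw [hdisj.eq_bot, finrank_bot] at hsum
  have hle : finrank ℝ ↥(W ⊔ W') ≤ finrank ℝ V := Submodule.finrank_le _
  have hcard : P.card + Pc.card = Fintype.card ι := by
    rw [hP, hPc, Finset.card_filter_add_card_filter_not, Finset.card_univ]
  have hn : Fintype.card ι = finrank ℝ V := (finrank_eq_card_basis b).symm
  omega

lemma sum_sign_eq_card {ι : Type*} [Fintype ι] [DecidableEq ι] (f : ι → ℝ) :
    ∑ i, Real.sign (f i) =
      ((univ.filter fun i => 0 < f i).card : ℝ) - (univ.filter fun i => f i < 0).card := by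
  rw [← Finset.sum_filter_add_sum_filter_not univ (fun i => 0 < f i)]
  have h1 : ∑ i ∈ univ.filter (fun i => 0 < f i), Real.sign (f i)
      = ((univ.filter fun i => 0 < f i).card : ℝ) := by
    rw [Finset.sum_congr rfl (fun i hi => Real.sign_of_pos (Finset.mem_filter.mp hi).2)]
    simp
  have h2 : ∑ i ∈ univ.filter (fun i => ¬ 0 < f i), Real.sign (f i)
      = -((univ.filter fun i => f i < 0).card : ℝ) := by
    rw [← Finset.sum_filter_add_sum_filter_not (univ.filter fun i => ¬ 0 < f i)
      (fun i => f i < 0)]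
    have hA : (univ.filter fun i => ¬ 0 < f i).filter (fun i => f i < 0)
        = univ.filter fun i => f i < 0 := by
      ext i
      simp only [Finset.mem_filter, Finset.mem_univ, true_and]
      exact ⟨fun h => h.2, fun h => ⟨asymm h, h⟩⟩
    rw [hA]
    have hB : ∑ i ∈ univ.filter (fun i => f i < 0), Real.sign (f i)
        = -((univ.filter fun i => f i < 0).card : ℝ) := by
      rw [Finset.sum_congr rfl (fun i hi => Real.sign_of_neg (Finset.mem_filter.mp hi).2)]
      simp
    have hC : ∑ i ∈ ((univ.filter fun i => ¬ 0 < f i).filter (fun i => ¬ f i < 0)),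
        Real.sign (f i) = 0 := by
      apply Finset.sum_eq_zero
      intro i hi
      obtain ⟨hi1, hi2⟩ := Finset.mem_filter.mp hi
      have : f i = 0 := le_antisymm (not_lt.mp (Finset.mem_filter.mp hi1).2) (not_lt.mp hi2)
      rw [this, Real.sign_zero]
    rw [hB, hC, add_zero]
  rw [h1, h2]
  ring

lemma sum_sign_eq_sum_sign [FiniteDimensional ℝ V] (B : LinearMap.BilinForm ℝ V)
    {ι ι' : Type*} [Fintype ι] [Fintype ι'] [DecidableEq ι] [DecidableEq ι']
    (b : Basis ι ℝ V) (c : Basis ι' ℝ V)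
    (hb : ∀ i j, i ≠ j → B (b i) (b j) = 0) (hc : ∀ i j, i ≠ j → B (c i) (c j) = 0) :
    ∑ i, Real.sign (B (b i) (b i)) = ∑ i, Real.sign (B (c i) (c i)) := by
  rw [sum_sign_eq_card, sum_sign_eq_card]
  have hb' : ∀ i j, i ≠ j → (-B) (b i) (b j) = 0 := by
    intro i j hij; simp [hb i j hij]
  have hc' : ∀ i j, i ≠ j → (-B) (c i) (c j) = 0 := by
    intro i j hij; simp [hc i j hij]
  have hpos : (univ.filter fun i : ι => 0 < B (b i) (b i)).card
      = (univ.filter fun i : ι' => 0 < B (c i) (c i)).card :=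
    le_antisymm (posCard_le B c b hc hb) (posCard_le B b c hb hc)
  have hneg : (univ.filter fun i : ι => B (b i) (b i) < 0).card
      = (univ.filter fun i : ι' => B (c i) (c i) < 0).card := by
    have h1 : ∀ i : ι, (B (b i) (b i) < 0) = (0 < (-B) (b i) (b i)) := by
      intro i; simp [neg_pos]
    have h2 : ∀ i : ι', (B (c i) (c i) < 0) = (0 < (-B) (c i) (c i)) := by
      intro i; simp [neg_pos]
    simp only [h1, h2]
    exact le_antisymm (posCard_le (-B) c b hc' hb') (posCard_le (-B) b c hb' hc')
  rw [hpos, hneg]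

end SignAux


lemma trace_swap_eq_zero {V : Type*} [AddCommGroup V] [Module ℝ V] [Module.Finite ℝ V]
    {p q : Submodule ℝ V} (h : IsCompl p q) (f : V →ₗ[ℝ] V)
    (hpq : ∀ x ∈ p, f x ∈ q) (hqp : ∀ x ∈ q, f x ∈ p) :
    LinearMap.trace ℝ V f = 0 := by
  let b0 := Module.finBasis ℝ p
  let b1 := Module.finBasis ℝ q
  let bb := (b0.prod b1).map (Submodule.prodEquivOfIsCompl p q h)
  rw [LinearMap.trace_eq_matrix_trace ℝ bb, Matrix.trace]
  apply Finset.sum_eq_zero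
  intro i _
  have hl : ∀ j, bb (Sum.inl j) = (b0 j : V) := by
    intro j
    rw [Basis.map_apply, Submodule.coe_prodEquivOfIsCompl', Basis.prod_apply_inl_fst,
      Basis.prod_apply_inl_snd]
    simp
  have hr : ∀ j, bb (Sum.inr j) = (b1 j : V) := by
    intro j
    rw [Basis.map_apply, Submodule.coe_prodEquivOfIsCompl', Basis.prod_apply_inr_fst,
      Basis.prod_apply_inr_snd]
    simp
  cases i with
  | inl j =>
    have h2 : f (bb (Sum.inl j)) ∈ q := by rw [hl j]; exact hpq _ (b0 j).2
    have h3 : ((Submodule.prodEquivOfIsCompl p q h).symm (f (bb (Sum.inl j)))).1 = 0 :=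
      (Submodule.prodEquivOfIsCompl_symm_apply_fst_eq_zero p q h).mpr h2
    rw [Matrix.diag_apply, LinearMap.toMatrix_apply]
    rw [show bb.repr = ((p.prodEquivOfIsCompl q h).symm.trans (b0.prod b1).repr) from rfl]
    rw [LinearEquiv.trans_apply, Basis.prod_repr_inl, h3]
    simp
  | inr j =>
    have h2 : f (bb (Sum.inr j)) ∈ p := by rw [hr j]; exact hqp _ (b1 j).2
    have h3 : ((Submodule.prodEquivOfIsCompl p q h).symm (f (bb (Sum.inr j)))).2 = 0 :=
      (Submodule.prodEquivOfIsCompl_symm_apply_snd_eq_zero p q h).mpr h2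
    rw [Matrix.diag_apply, LinearMap.toMatrix_apply]
    rw [show bb.repr = ((p.prodEquivOfIsCompl q h).symm.trans (b0.prod b1).repr) from rfl]
    rw [LinearEquiv.trans_apply, Basis.prod_repr_inr, h3]
    simp

/-- For a finite-dimensional real `ℤ₂`-graded Lie algebra `L = L₀ ⊕ L₁` and
the Lie algebra `L^{-1}` (realized via a linear equivalence `e : L ≃ₗ[ℝ] M`) whose bracket is
twisted by `-1` on `[L₁, L₁]`, one has
`sign(κ_L) + sign(κ_{L^{-1}}) = 2·sign(κ_L|_{L₀})`. -/
theorem signature_add_signature_twisted {L M : Type*} [LieRing L] [LieAlgebra ℝ L]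
    [Module.Finite ℝ L] [LieRing M] [LieAlgebra ℝ M] [Module.Finite ℝ M]
    (L0 L1 : Submodule ℝ L) (hcompl : IsCompl L0 L1)
    (h00 : ∀ x ∈ L0, ∀ y ∈ L0, ⁅x, y⁆ ∈ L0)
    (h01 : ∀ x ∈ L0, ∀ y ∈ L1, ⁅x, y⁆ ∈ L1)
    (h11 : ∀ x ∈ L1, ∀ y ∈ L1, ⁅x, y⁆ ∈ L0)
    (e : L ≃ₗ[ℝ] M)
    (he0 : ∀ x ∈ L0, ∀ y : L, e ⁅x, y⁆ = ⁅e x, e y⁆)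
    (he1 : ∀ u ∈ L1, ∀ v ∈ L1, ⁅e u, e v⁆ = - e ⁅u, v⁆)
    (s s' s0 : ℤ)
    (hs : IsSignature (killingForm ℝ L) s)
    (hs' : IsSignature (killingForm ℝ M) s')
    (hs0 : IsSignature ((killingForm ℝ L).restrict L0) s0) :
    s + s' = 2 * s0 := by
  have hbr : ∀ u ∈ L1, ∀ z ∈ L0, ⁅u, z⁆ ∈ L1 := by
    intro u hu z hz
    rw [← lie_skew]
    exact neg_mem (h01 z hz u hu)
  have hdec : ∀ z : L, ∃ z0 ∈ L0, ∃ z1 ∈ L1, z0 + z1 = z := by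
    intro z
    exact Submodule.mem_sup.mp (by rw [hcompl.sup_eq_top]; exact Submodule.mem_top)
  have he10 : ∀ u ∈ L1, ∀ z ∈ L0, ⁅e u, e z⁆ = e ⁅u, z⁆ := by
    intro u hu z hz
    have h : e ⁅u, z⁆ = -⁅e z, e u⁆ := by rw [← lie_skew, map_neg, he0 z hz u]
    rw [h, lie_skew]
  have hcross : ∀ x ∈ L0, ∀ u ∈ L1, killingForm ℝ L x u = 0 := by
    intro x hx u hu
    rw [killingForm_apply_apply]
    apply trace_swap_eq_zero hcompl
    · intro z hz
      simp only [LinearMap.comp_apply, LieAlgebra.ad_apply]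
      exact h01 x hx _ (hbr u hu z hz)
    · intro z hz
      simp only [LinearMap.comp_apply, LieAlgebra.ad_apply]
      exact h00 x hx _ (h11 u hu z hz)
  have key : ∀ (a b : L) (F : L →ₗ[ℝ] L), (∀ z : L, ⁅e a, ⁅e b, e z⁆⁆ = e (F z)) →
      killingForm ℝ M (e a) (e b) = LinearMap.trace ℝ L F := by
    intro a b F hF
    rw [killingForm_apply_apply, ← LinearMap.trace_conj' F e]
    congr 1
    ext m
    rw [LinearEquiv.conj_apply_apply]
    simp only [LinearMap.comp_apply, LieAlgebra.ad_apply]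
    rw [← hF (e.symm m), LinearEquiv.apply_symm_apply]
  have hM00 : ∀ x ∈ L0, ∀ y ∈ L0, killingForm ℝ M (e x) (e y) = killingForm ℝ L x y := by
    intro x hx y hy
    rw [key x y (LieAlgebra.ad ℝ L x ∘ₗ LieAlgebra.ad ℝ L y) ?_, killingForm_apply_apply]
    intro z
    rw [← he0 y hy z, ← he0 x hx]
    simp only [LinearMap.comp_apply, LieAlgebra.ad_apply]
  have hM11 : ∀ u ∈ L1, ∀ v ∈ L1, killingForm ℝ M (e u) (e v) = -killingForm ℝ L u v := by
    intro u hu v hv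
    rw [key u v (-(LieAlgebra.ad ℝ L u ∘ₗ LieAlgebra.ad ℝ L v)) ?_, map_neg,
      killingForm_apply_apply]
    intro z
    obtain ⟨z0, hz0, z1, hz1, rfl⟩ := hdec z
    have c0 : ⁅e u, ⁅e v, e z0⁆⁆ = -e ⁅u, ⁅v, z0⁆⁆ := by
      rw [he10 v hv z0 hz0, he1 u hu _ (hbr v hv z0 hz0)]
    have c1 : ⁅e u, ⁅e v, e z1⁆⁆ = -e ⁅u, ⁅v, z1⁆⁆ := by
      rw [he1 v hv z1 hz1, lie_neg, he10 u hu _ (h11 v hv z1 hz1)]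
    rw [map_add, lie_add, lie_add, c0, c1]
    simp only [LinearMap.neg_apply, LinearMap.comp_apply, LieAlgebra.ad_apply, map_add,
      map_neg, lie_add]
  have hM01 : ∀ x ∈ L0, ∀ u ∈ L1, killingForm ℝ M (e x) (e u) = 0 := by
    intro x hx u hu
    set π0 : L →ₗ[ℝ] L := L0.subtype ∘ₗ (L0.projectionOnto L1 hcompl) with hπ0
    set π1 : L →ₗ[ℝ] L := L1.subtype ∘ₗ (L1.projectionOnto L0 hcompl.symm) with hπ1
    have hπ0L0 : ∀ z ∈ L0, π0 z = z := by
      intro z hz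
      have h := Submodule.linearProjOfIsCompl_apply_left hcompl (⟨z, hz⟩ : L0)
      simp only [hπ0, LinearMap.comp_apply]
      rw [show (z : L) = ((⟨z, hz⟩ : L0) : L) from rfl, h]
      rfl
    have hπ0L1 : ∀ z ∈ L1, π0 z = 0 := by
      intro z hz
      simp only [hπ0, LinearMap.comp_apply,
        Submodule.projectionOnto_apply_of_mem_right hcompl hz, Submodule.coe_zero]
      exact map_zero _
    have hπ1L1 : ∀ z ∈ L1, π1 z = z := by
      intro z hz
      have h := Submodule.linearProjOfIsCompl_apply_left hcompl.symm (⟨z, hz⟩ : L1)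
      simp only [hπ1, LinearMap.comp_apply]
      rw [show (z : L) = ((⟨z, hz⟩ : L1) : L) from rfl, h]
      rfl
    have hπ1L0 : ∀ z ∈ L0, π1 z = 0 := by
      intro z hz
      simp only [hπ1, LinearMap.comp_apply,
        Submodule.projectionOnto_apply_of_mem_right hcompl.symm hz, Submodule.coe_zero]
      exact map_zero _
    set F : L →ₗ[ℝ] L := (LieAlgebra.ad ℝ L x ∘ₗ LieAlgebra.ad ℝ L u) ∘ₗ π0
      - (LieAlgebra.ad ℝ L x ∘ₗ LieAlgebra.ad ℝ L u) ∘ₗ π1 with hFdef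
    have hFz : ∀ z : L, ⁅e x, ⁅e u, e z⁆⁆ = e (F z) := by
      intro z
      obtain ⟨z0, hz0, z1, hz1, rfl⟩ := hdec z
      have c0 : ⁅e x, ⁅e u, e z0⁆⁆ = e ⁅x, ⁅u, z0⁆⁆ := by
        rw [he10 u hu z0 hz0, ← he0 x hx]
      have c1 : ⁅e x, ⁅e u, e z1⁆⁆ = -e ⁅x, ⁅u, z1⁆⁆ := by
        rw [he1 u hu z1 hz1, lie_neg, ← he0 x hx]
      have hF01 : F (z0 + z1) = ⁅x, ⁅u, z0⁆⁆ - ⁅x, ⁅u, z1⁆⁆ := by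
        simp only [hFdef, LinearMap.sub_apply, LinearMap.comp_apply, map_add,
          hπ0L0 z0 hz0, hπ0L1 z1 hz1, hπ1L0 z0 hz0, hπ1L1 z1 hz1, add_zero, zero_add,
          LieAlgebra.ad_apply, lie_zero, sub_zero, zero_sub]
        rw [sub_eq_add_neg]
      rw [hF01, map_sub, map_add, lie_add, lie_add, c0, c1, sub_eq_add_neg]
    rw [key x u F hFz]
    apply trace_swap_eq_zero hcompl
    · intro z hz
      have : F z = ⁅x, ⁅u, z⁆⁆ := by
        simp only [hFdef, LinearMap.sub_apply, LinearMap.comp_apply, hπ0L0 z hz,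
          hπ1L0 z hz, map_zero, sub_zero, LieAlgebra.ad_apply]
      rw [this]
      exact h01 x hx _ (hbr u hu z hz)
    · intro z hz
      have : F z = -⁅x, ⁅u, z⁆⁆ := by
        simp only [hFdef, LinearMap.sub_apply, LinearMap.comp_apply, hπ0L1 z hz,
          hπ1L1 z hz, map_zero, zero_sub, LieAlgebra.ad_apply]
      rw [this]
      exact neg_mem (h00 x hx _ (h11 u hu z hz))
  have hLsymm : ∀ a b : L, killingForm ℝ L a b = killingForm ℝ L b a := fun a b =>
    LieModule.traceForm_comm ℝ L L a b
  have hMsymm : ∀ a b : M, killingForm ℝ M a b = killingForm ℝ M b a := fun a b =>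
    LieModule.traceForm_comm ℝ M M a b
  obtain ⟨n0, b0, hb0orth, hb0sum⟩ := hs0
  have hsymm1 : ((killingForm ℝ L).restrict L1).IsSymm := by
    refine ⟨fun a b => ?_⟩
    simp only [LinearMap.BilinForm.restrict_apply, RingHom.id_apply]
    exact hLsymm _ _
  haveI : Invertible (2 : ℝ) := invertibleOfNonzero two_ne_zero
  obtain ⟨b1, hb1orth⟩ := LinearMap.BilinForm.exists_orthogonal_basis (LinearMap.BilinForm.isSymm_iff.mp hsymm1)
  set bb := (b0.prod b1).map (Submodule.prodEquivOfIsCompl L0 L1 hcompl) with hbbdef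
  have hbbl : ∀ i, bb (Sum.inl i) = (b0 i : L) := by
    intro i
    rw [hbbdef, Basis.map_apply, Submodule.coe_prodEquivOfIsCompl', Basis.prod_apply_inl_fst,
      Basis.prod_apply_inl_snd]
    simp
  have hbbr : ∀ i, bb (Sum.inr i) = (b1 i : L) := by
    intro i
    rw [hbbdef, Basis.map_apply, Submodule.coe_prodEquivOfIsCompl', Basis.prod_apply_inr_fst,
      Basis.prod_apply_inr_snd]
    simp
  have hbborth : ∀ k l, k ≠ l → killingForm ℝ L (bb k) (bb l) = 0 := by
    rintro (i | i) (j | j) hkl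
    · rw [hbbl, hbbl]
      have := hb0orth i j (fun h => hkl (by rw [h]))
      simpa using this
    · rw [hbbl, hbbr]; exact hcross _ (b0 i).2 _ (b1 j).2
    · rw [hbbr, hbbl, hLsymm]; exact hcross _ (b0 j).2 _ (b1 i).2
    · rw [hbbr, hbbr]
      exact hb1orth (fun h => hkl (by rw [h]))
  set σ1 : ℝ := ∑ i, Real.sign (killingForm ℝ L (b1 i : L) (b1 i : L)) with hσ1
  have hsumL : ∑ k, Real.sign (killingForm ℝ L (bb k) (bb k)) = (s0 : ℝ) + σ1 := by
    rw [Fintype.sum_sum_type]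
    congr 1
    · rw [hb0sum]
      refine Finset.sum_congr rfl fun i _ => ?_
      rw [hbbl]
      simp
    · rw [hσ1]
      refine Finset.sum_congr rfl fun i _ => ?_
      rw [hbbr]
  obtain ⟨n, bL, hbLorth, hbLsum⟩ := hs
  have hsL : (s : ℝ) = (s0 : ℝ) + σ1 := by
    rw [hbLsum, sum_sign_eq_sum_sign (killingForm ℝ L) bL bb hbLorth hbborth, hsumL]
  set cb := bb.map e with hcbdef
  have hcb : ∀ k, cb k = e (bb k) := fun k => by rw [hcbdef, Basis.map_apply]
  have hcborth : ∀ k l, k ≠ l → killingForm ℝ M (cb k) (cb l) = 0 := by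
    rintro (i | i) (j | j) hkl <;> rw [hcb, hcb]
    · rw [hbbl, hbbl, hM00 _ (b0 i).2 _ (b0 j).2]
      have := hb0orth i j (fun h => hkl (by rw [h]))
      simpa using this
    · rw [hbbl, hbbr]; exact hM01 _ (b0 i).2 _ (b1 j).2
    · rw [hbbr, hbbl, hMsymm]; exact hM01 _ (b0 j).2 _ (b1 i).2
    · rw [hbbr, hbbr, hM11 _ (b1 i).2 _ (b1 j).2]
      have h0 : killingForm ℝ L (b1 i : L) (b1 j : L) = 0 :=
        hb1orth (fun h => hkl (by rw [h]))
      rw [h0, neg_zero]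
  have hsumM : ∑ k, Real.sign (killingForm ℝ M (cb k) (cb k)) = (s0 : ℝ) - σ1 := by
    rw [Fintype.sum_sum_type]
    have h1 : ∀ i, Real.sign (killingForm ℝ M (cb (Sum.inl i)) (cb (Sum.inl i)))
        = Real.sign (((killingForm ℝ L).restrict L0) (b0 i) (b0 i)) := by
      intro i
      rw [hcb, hbbl, hM00 _ (b0 i).2 _ (b0 i).2]
      simp
    have h2 : ∀ i, Real.sign (killingForm ℝ M (cb (Sum.inr i)) (cb (Sum.inr i)))
        = -Real.sign (killingForm ℝ L (b1 i : L) (b1 i : L)) := by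
      intro i
      rw [hcb, hbbr, hM11 _ (b1 i).2 _ (b1 i).2, Real.sign_neg]
    rw [Finset.sum_congr rfl fun i _ => h1 i, Finset.sum_congr rfl fun i _ => h2 i,
      Finset.sum_neg_distrib, ← hb0sum, hσ1, sub_eq_add_neg]
  obtain ⟨m, bM, hbMorth, hbMsum⟩ := hs'
  have hsM : (s' : ℝ) = (s0 : ℝ) - σ1 := by
    rw [hbMsum, sum_sign_eq_sum_sign (killingForm ℝ M) bM cb hbMorth hcborth, hsumM]
  have hfin : (s : ℝ) + (s' : ℝ) = 2 * (s0 : ℝ) := by rw [hsL, hsM]; ring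
  exact_mod_cast hfin
end

section
/- Let S be a complex semisimple Lie algebra, σ a conjugation (conjugate-linear involutive automorphism) of S, and θ an involutive ℂ-linear automorphism of S commuting with σ such that the conjugation θσ is compact (its fixed real form has negative definite Killing form). Then the signature of the Killing form of the real form S^σ = {x ∈ S : σ(x) = x} equals dim_ℂ S - 2·dim_ℂ fix(θ), where fix(θ) = {x ∈ S : θ(x) = x}. -/
set_option maxHeartbeats 1000000


open LieAlgebra Module

section AuxRealForm

variable {V W : Type*} [AddCommGroup V] [Module ℝ V] [Module ℂ V] [IsScalarTower ℝ ℂ V]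
  [AddCommGroup W] [Module ℝ W]

/-- Multiplication by `I` as an `ℝ`-linear endomorphism. -/
noncomputable def auxI : V →ₗ[ℝ] V where
  toFun x := (Complex.I : ℂ) • x
  map_add' x y := smul_add _ x y
  map_smul' r x := (smul_comm r (Complex.I : ℂ) x).symm

noncomputable def auxL (ι : W →ₗ[ℝ] V) : (W × W) →ₗ[ℝ] V :=
  ι.coprod (auxI.comp ι)

lemma auxL_apply (ι : W →ₗ[ℝ] V) (p : W × W) :
    auxL ι p = ι p.1 + (Complex.I : ℂ) • ι p.2 := rfl

lemma auxL_bijective (ι : W →ₗ[ℝ] V)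
    (hspan : ∀ x : V, ∃ a b : W, ι a + (Complex.I : ℂ) • ι b = x)
    (hzero : ∀ a b : W, ι a + (Complex.I : ℂ) • ι b = 0 → a = 0 ∧ b = 0) :
    Function.Bijective (auxL ι) := by
  constructor
  · intro p q h
    have h0 : auxL ι (p - q) = 0 := by rw [map_sub, h, sub_self]
    obtain ⟨h1, h2⟩ := hzero (p - q).1 (p - q).2 h0
    have : p - q = 0 := Prod.ext h1 h2
    exact sub_eq_zero.mp this
  · intro x
    obtain ⟨a, b, hab⟩ := hspan x
    exact ⟨(a, b), hab⟩

lemma aux_trace [Module.Finite ℝ W] (ι : W →ₗ[ℝ] V)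
    (hspan : ∀ x : V, ∃ a b : W, ι a + (Complex.I : ℂ) • ι b = x)
    (hzero : ∀ a b : W, ι a + (Complex.I : ℂ) • ι b = 0 → a = 0 ∧ b = 0)
    (f : V →ₗ[ℝ] V) (f' : W →ₗ[ℝ] W) (hcomm : ∀ w, f (ι w) = ι (f' w))
    (hI : ∀ x : V, f ((Complex.I : ℂ) • x) = (Complex.I : ℂ) • f x) :
    LinearMap.trace ℝ V f = 2 * LinearMap.trace ℝ W f' := by
  set e := LinearEquiv.ofBijective (auxL ι) (auxL_bijective ι hspan hzero) with he
  have key : ∀ p : W × W, f (auxL ι p) = auxL ι (LinearMap.prodMap f' f' p) := by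
    intro p
    simp only [auxL_apply, map_add, hI, hcomm, LinearMap.prodMap_apply]
  have hfe : f = e.conj (LinearMap.prodMap f' f') := by
    ext x
    have hx : auxL ι (e.symm x) = x := e.apply_symm_apply x
    rw [LinearEquiv.conj_apply]
    simp only [LinearMap.comp_apply, LinearEquiv.coe_coe]
    calc f x = f (auxL ι (e.symm x)) := by rw [hx]
    _ = auxL ι (LinearMap.prodMap f' f' (e.symm x)) := key _
    _ = e (LinearMap.prodMap f' f' (e.symm x)) := rfl
  rw [hfe, LinearMap.trace_conj', LinearMap.trace_prodMap', two_mul]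

lemma aux_finrank [Module.Finite ℝ W] (ι : W →ₗ[ℝ] V)
    (hspan : ∀ x : V, ∃ a b : W, ι a + (Complex.I : ℂ) • ι b = x)
    (hzero : ∀ a b : W, ι a + (Complex.I : ℂ) • ι b = 0 → a = 0 ∧ b = 0) :
    finrank ℝ V = 2 * finrank ℝ W := by
  have e := LinearEquiv.ofBijective (auxL ι) (auxL_bijective ι hspan hzero)
  rw [← e.finrank_eq, Module.finrank_prod, two_mul]

lemma span_of_conj (φ : V →ₗ[ℝ] V)
    (hconj : ∀ (c : ℂ) (x : V), φ (c • x) = (starRingEnd ℂ) c • φ x)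
    (h2 : ∀ x, φ (φ x) = x)
    (ι : W →ₗ[ℝ] V)
    (hrange : ∀ x : V, (∃ w, ι w = x) ↔ φ x = x)
    (hinj : Function.Injective ι) :
    (∀ x : V, ∃ a b : W, ι a + (Complex.I : ℂ) • ι b = x) ∧
    (∀ a b : W, ι a + (Complex.I : ℂ) • ι b = 0 → a = 0 ∧ b = 0) := by
  constructor
  · intro x
    have ha : φ ((2⁻¹ : ℝ) • (x + φ x)) = (2⁻¹ : ℝ) • (x + φ x) := by
      rw [map_smul, map_add, h2, add_comm]
    have hb : φ ((2⁻¹ : ℝ) • ((-Complex.I : ℂ) • (x - φ x))) =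
        (2⁻¹ : ℝ) • ((-Complex.I : ℂ) • (x - φ x)) := by
      rw [map_smul, hconj, map_sub, h2]
      rw [show (starRingEnd ℂ) (-Complex.I) = Complex.I by simp]
      congr 1
      rw [neg_smul, smul_sub, smul_sub, neg_sub]
    obtain ⟨a, hae⟩ := (hrange _).mpr ha
    obtain ⟨b, hbe⟩ := (hrange _).mpr hb
    refine ⟨a, b, ?_⟩
    rw [hae, hbe]
    rw [smul_comm (Complex.I : ℂ) ((2⁻¹ : ℝ)) ((-Complex.I : ℂ) • (x - φ x))]
    rw [smul_smul Complex.I (-Complex.I) (x - φ x)]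
    rw [show Complex.I * -Complex.I = 1 by simp [Complex.I_mul_I]]
    rw [one_smul, ← smul_add]
    rw [show x + φ x + (x - φ x) = (2 : ℝ) • x by rw [two_smul]; abel]
    rw [smul_smul]
    norm_num
  · intro a b hab
    have h1 : φ (ι a + (Complex.I : ℂ) • ι b) = 0 := by rw [hab, map_zero]
    have ha : φ (ι a) = ι a := (hrange _).mp ⟨a, rfl⟩
    have hb : φ (ι b) = ι b := (hrange _).mp ⟨b, rfl⟩
    rw [map_add, hconj, ha, hb, Complex.conj_I, neg_smul] at h1
    have hsum : ι a + (Complex.I : ℂ) • ι b + (ι a - (Complex.I : ℂ) • ι b) = 0 := by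
      rw [hab]
      rw [show ι a + -((Complex.I : ℂ) • ι b) = ι a - (Complex.I : ℂ) • ι b from by abel] at h1
      rw [h1, add_zero]
    have h2a : (2 : ℝ) • ι a = 0 := by rw [two_smul]; linear_combination (norm := abel) hsum
    have hιa : ι a = 0 := by
      have := smul_eq_zero.mp h2a
      simpa using this
    have hιb : ι b = 0 := by
      have hz : (Complex.I : ℂ) • ι b = 0 := by
        have := hab; rw [hιa, zero_add] at this; exact this
      rcases smul_eq_zero.mp hz with h | h
      · exact absurd h Complex.I_ne_zero
      · exact h
    constructor
    · apply hinj; rw [hιa, map_zero]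
    · apply hinj; rw [hιb, map_zero]

end AuxRealForm

variable {S : Type*} [LieRing S] [LieAlgebra ℂ S] [LieAlgebra ℝ S] [IsScalarTower ℝ ℂ S]

/-- The fixed points of an `ℝ`-linear Lie algebra endomorphism, as a real Lie subalgebra. -/
def fixR (f : S →ₗ⁅ℝ⁆ S) : LieSubalgebra ℝ S :=
  { carrier := {x | f x = x}
    add_mem' := by
      intro a b ha hb
      simp only [Set.mem_setOf_eq] at *
      rw [map_add f, ha, hb]
    zero_mem' := by
      simp only [Set.mem_setOf_eq]
      exact f.map_zero
    smul_mem' := by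
      intro c x hx
      simp only [Set.mem_setOf_eq] at *
      rw [map_smul f, hx]
    lie_mem' := by
      intro x y hx hy
      simp only [Set.mem_setOf_eq] at *
      rw [f.map_lie, hx, hy] }

set_option linter.unusedSectionVars false

lemma mem_fixR {f : S →ₗ⁅ℝ⁆ S} {x : S} : x ∈ fixR f ↔ f x = x := Iff.rfl

lemma coe_fixR (f : S →ₗ⁅ℝ⁆ S) (x : ↥(fixR f)) : f (x : S) = (x : S) := x.2

/-- The inclusion of the fixed subalgebra, as an `ℝ`-linear map. -/
def fixRincl (f : S →ₗ⁅ℝ⁆ S) : ↥(fixR f) →ₗ[ℝ] S := ((fixR f).incl : _ →ₗ⁅ℝ⁆ S).toLinearMap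

lemma fixRincl_apply (f : S →ₗ⁅ℝ⁆ S) (x : ↥(fixR f)) : fixRincl f x = (x : S) := rfl

lemma fixRincl_injective (f : S →ₗ⁅ℝ⁆ S) : Function.Injective (fixRincl f) :=
  Subtype.val_injective

lemma fixR_range (f : S →ₗ⁅ℝ⁆ S) (x : S) : (∃ w, fixRincl f w = x) ↔ f x = x := by
  constructor
  · rintro ⟨w, rfl⟩
    exact w.2
  · intro h
    exact ⟨⟨x, h⟩, rfl⟩

lemma two_mul_killing [Module.Finite ℂ S] (φ : S →ₗ⁅ℝ⁆ S)
    (hconj : ∀ (c : ℂ) (x : S), φ (c • x) = (starRingEnd ℂ) c • φ x)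
    (h2 : ∀ x, φ (φ x) = x) (x y : ↥(fixR φ)) :
    2 * killingForm ℝ ↥(fixR φ) x y
      = LinearMap.trace ℝ S (ad ℝ S (x : S) ∘ₗ ad ℝ S (y : S)) := by
  have hfin : Module.Finite ℝ S := Module.Finite.trans ℂ S
  have hfinW : Module.Finite ℝ ↥(fixR φ) :=
    Module.Finite.of_injective (fixRincl φ) (fixRincl_injective φ)
  obtain ⟨hspan, hzero⟩ := span_of_conj φ.toLinearMap hconj h2 (fixRincl φ)
    (fixR_range φ) (fixRincl_injective φ)
  have hcomm : ∀ w : ↥(fixR φ),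
      (ad ℝ S (x : S) ∘ₗ ad ℝ S (y : S)) (fixRincl φ w)
        = fixRincl φ ((ad ℝ ↥(fixR φ) x ∘ₗ ad ℝ ↥(fixR φ) y) w) := by
    intro w
    simp only [LinearMap.comp_apply, ad_apply, fixRincl_apply]
    rw [LieSubalgebra.coe_bracket, LieSubalgebra.coe_bracket]
  have hI : ∀ z : S, (ad ℝ S (x : S) ∘ₗ ad ℝ S (y : S)) ((Complex.I : ℂ) • z)
      = (Complex.I : ℂ) • (ad ℝ S (x : S) ∘ₗ ad ℝ S (y : S)) z := by
    intro z
    simp only [LinearMap.comp_apply, ad_apply, lie_smul]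
  rw [killingForm_apply_apply,
    aux_trace (fixRincl φ) hspan hzero _ _ hcomm hI]

lemma trace_ad_I_smul [Module.Finite ℂ S] (a : S) :
    LinearMap.trace ℝ S (ad ℝ S ((Complex.I : ℂ) • a) ∘ₗ ad ℝ S ((Complex.I : ℂ) • a))
      = - LinearMap.trace ℝ S (ad ℝ S a ∘ₗ ad ℝ S a) := by
  have h : ad ℝ S ((Complex.I : ℂ) • a) ∘ₗ ad ℝ S ((Complex.I : ℂ) • a)
      = - (ad ℝ S a ∘ₗ ad ℝ S a) := by
    ext z
    simp only [LinearMap.comp_apply, ad_apply, LinearMap.neg_apply]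
    rw [smul_lie, smul_lie, lie_smul, smul_smul, Complex.I_mul_I, neg_one_smul]
  rw [h, map_neg]

/-- The fixed points of a `ℂ`-linear involutive automorphism `θ`, as a complex submodule. -/
def fixC (θ : S →ₗ⁅ℝ⁆ S) (hθ : ∀ (c : ℂ) (x : S), θ (c • x) = c • θ x) : Submodule ℂ S :=
  { carrier := {x | θ x = x}
    add_mem' := by
      intro a b ha hb
      simp only [Set.mem_setOf_eq] at *
      rw [map_add θ, ha, hb]
    zero_mem' := by
      simp only [Set.mem_setOf_eq]
      exact θ.map_zero
    smul_mem' := by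
      intro c x hx
      simp only [Set.mem_setOf_eq] at *
      rw [hθ, hx] }

/-- Let `S` be a complex semisimple Lie algebra, `σ` a conjugation of `S`,
and `θ` an involutive `ℂ`-linear automorphism commuting with `σ` such that the conjugation
`θσ` is compact (the Killing form of its fixed real form is negative definite).  Then the
signature of the Killing form of the real form `S^σ` equals
`dim_ℂ S - 2 · dim_ℂ fix(θ)`. -/
theorem signature_real_form_eq [Module.Finite ℂ S] [LieAlgebra.IsSemisimple ℂ S]
    (σ θ : S →ₗ⁅ℝ⁆ S)
    (hσconj : ∀ (c : ℂ) (x : S), σ (c • x) = (starRingEnd ℂ) c • σ x)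
    (hσ2 : ∀ x, σ (σ x) = x)
    (hθc : ∀ (c : ℂ) (x : S), θ (c • x) = c • θ x)
    (hθ2 : ∀ x, θ (θ x) = x)
    (hcomm : ∀ x, θ (σ x) = σ (θ x))
    (hcompact : ∀ x : fixR (θ.comp σ), x ≠ 0 →
      killingForm ℝ (fixR (θ.comp σ)) x x < 0) :
    IsSignature (killingForm ℝ (fixR σ))
      ((finrank ℂ S : ℤ) - 2 * (finrank ℂ (fixC θ hθc) : ℤ)) := by
  classical
  have hfinS : Module.Finite ℝ S := Module.Finite.trans ℂ S
  have hfinG : Module.Finite ℝ ↥(fixR σ) :=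
    Module.Finite.of_injective (fixRincl σ) (fixRincl_injective σ)
  -- the compact conjugation τ = θ ∘ σ
  set τ : S →ₗ⁅ℝ⁆ S := θ.comp σ with hτdef
  have hτ : ∀ x : S, τ x = θ (σ x) := fun _ => rfl
  have hτconj : ∀ (c : ℂ) (x : S), τ (c • x) = (starRingEnd ℂ) c • τ x := by
    intro c x; rw [hτ, hτ, hσconj, hθc]
  have hτ2 : ∀ x, τ (τ x) = x := by
    intro x
    calc τ (τ x) = θ (σ (θ (σ x))) := rfl
    _ = θ (θ (σ (σ x))) := by rw [← hcomm]
    _ = x := by rw [hσ2, hθ2]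
  -- θ as an ℝ-linear endomorphism of the real form g = fixR σ
  have θmem : ∀ x : S, σ x = x → σ (θ x) = θ x := fun x hx => by rw [← hcomm, hx]
  set θg : ↥(fixR σ) →ₗ[ℝ] ↥(fixR σ) :=
    { toFun := fun x => ⟨θ (x : S), θmem _ (coe_fixR σ x)⟩
      map_add' := fun a b => Subtype.ext (θ.map_add (a : S) (b : S))
      map_smul' := fun r a => Subtype.ext (θ.map_smul r (a : S)) } with hθgdef
  have θg_coe : ∀ x : ↥(fixR σ), ((θg x : ↥(fixR σ)) : S) = θ (x : S) := fun _ => rfl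
  have θg2 : ∀ x, θg (θg x) = x := fun x => Subtype.ext (by rw [θg_coe, θg_coe, hθ2])
  -- θ as a Lie algebra automorphism of g
  set θE : ↥(fixR σ) ≃ₗ⁅ℝ⁆ ↥(fixR σ) :=
    { toLinearMap := θg
      map_lie' := fun {x y} => Subtype.ext (θ.map_lie (x : S) (y : S))
      invFun := θg
      left_inv := θg2
      right_inv := θg2 } with hθEdef
  have hθEapp : ∀ x, θE x = θg x := fun _ => rfl
  -- eigenspace decomposition g = K ⊕ P
  set K : Submodule ℝ ↥(fixR σ) := LinearMap.ker (θg - LinearMap.id) with hKdef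
  set P : Submodule ℝ ↥(fixR σ) := LinearMap.ker (θg + LinearMap.id) with hPdef
  have memK : ∀ x, x ∈ K ↔ θg x = x := by
    intro x
    rw [hKdef, LinearMap.mem_ker, LinearMap.sub_apply, LinearMap.id_apply, sub_eq_zero]
  have memP : ∀ x, x ∈ P ↔ θg x = -x := by
    intro x
    rw [hPdef, LinearMap.mem_ker, LinearMap.add_apply, LinearMap.id_apply,
      add_eq_zero_iff_eq_neg]
  have hcompl : IsCompl K P := by
    constructor
    · rw [disjoint_iff, eq_bot_iff]
      intro x hx
      obtain ⟨h1, h2⟩ := Submodule.mem_inf.mp hx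
      have e1 := (memK x).mp h1
      have e2 := (memP x).mp h2
      have hx2 : (2 : ℝ) • x = 0 := by
        rw [two_smul]
        nth_rewrite 1 [← e1]
        rw [e2, neg_add_cancel]
      have : x = 0 := by
        rcases smul_eq_zero.mp hx2 with h | h
        · norm_num at h
        · exact h
      simpa using this
    · rw [codisjoint_iff, eq_top_iff]
      intro x _
      refine Submodule.mem_sup.mpr ⟨(2⁻¹ : ℝ) • (x + θg x), ?_, (2⁻¹ : ℝ) • (x - θg x), ?_, ?_⟩
      · rw [memK, map_smul, map_add, θg2, add_comm]
      · rw [memP, map_smul, map_sub, θg2, ← smul_neg, neg_sub]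
      · rw [← smul_add, show x + θg x + (x - θg x) = (2 : ℝ) • x by rw [two_smul]; abel,
          smul_smul]
        norm_num
  -- definiteness on K and P
  have negK : ∀ v : ↥(fixR σ), v ∈ K → v ≠ 0 → killingForm ℝ ↥(fixR σ) v v < 0 := by
    intro v hv hv0
    have hσv : σ (v : S) = v := coe_fixR σ v
    have hθv : θ (v : S) = v := congrArg Subtype.val ((memK v).mp hv)
    have hτv : (v : S) ∈ fixR τ := mem_fixR.mpr (by rw [hτ, hσv, hθv])
    set w : ↥(fixR τ) := ⟨(v : S), hτv⟩ with hwdef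
    have hw0 : w ≠ 0 := by
      intro h
      apply hv0
      apply Subtype.ext
      have h1 : (w : S) = (0 : S) := by rw [h]; simp
      exact h1.trans (by simp)
    have e1 := two_mul_killing σ hσconj hσ2 v v
    have e2 := two_mul_killing τ hτconj hτ2 w w
    have e3 : killingForm ℝ ↥(fixR σ) v v = killingForm ℝ ↥(fixR τ) w w := by
      have h22 : 2 * killingForm ℝ ↥(fixR σ) v v = 2 * killingForm ℝ ↥(fixR τ) w w := by
        rw [e1, e2]
      exact mul_left_cancel₀ two_ne_zero h22
    rw [e3]
    exact hcompact w hw0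
  have posP : ∀ v : ↥(fixR σ), v ∈ P → v ≠ 0 → 0 < killingForm ℝ ↥(fixR σ) v v := by
    intro v hv hv0
    have hσv : σ (v : S) = v := coe_fixR σ v
    have hθv : θ (v : S) = -(v : S) := by
      have := congrArg Subtype.val ((memP v).mp hv)
      rw [← θg_coe]
      simpa using this
    have hτv : (Complex.I : ℂ) • (v : S) ∈ fixR τ := mem_fixR.mpr (by
      rw [hτ, hσconj, hσv, Complex.conj_I, hθc, hθv]
      simp)
    set w : ↥(fixR τ) := ⟨(Complex.I : ℂ) • (v : S), hτv⟩ with hwdef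
    have hw0 : w ≠ 0 := by
      intro h
      have h1 : (Complex.I : ℂ) • (v : S) = 0 := congrArg Subtype.val h
      rcases smul_eq_zero.mp h1 with h2 | h2
      · exact Complex.I_ne_zero h2
      · exact hv0 (Subtype.ext h2)
    have e1 := two_mul_killing σ hσconj hσ2 v v
    have e2 := two_mul_killing τ hτconj hτ2 w w
    have e4 : 2 * killingForm ℝ ↥(fixR τ) w w = 2 * (- killingForm ℝ ↥(fixR σ) v v) := by
      rw [e2, show ((w : S)) = (Complex.I : ℂ) • (v : S) from rfl, trace_ad_I_smul, ← e1]
      ring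
    have e5 : killingForm ℝ ↥(fixR τ) w w = - killingForm ℝ ↥(fixR σ) v v :=
      mul_left_cancel₀ two_ne_zero e4
    have := hcompact w hw0
    rw [e5] at this
    linarith
  -- orthogonality of K and P
  have hsymm : ∀ v w, killingForm ℝ ↥(fixR σ) v w = killingForm ℝ ↥(fixR σ) w v :=
    fun v w => LieModule.traceForm_comm ℝ ↥(fixR σ) ↥(fixR σ) v w
  have orthKP : ∀ v ∈ K, ∀ w ∈ P, killingForm ℝ ↥(fixR σ) v w = 0 := by
    intro v hv w hw
    have h1 := killingForm_of_equiv_apply (R := ℝ) θE v w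
    rw [hθEapp, hθEapp, (memK v).mp hv, (memP w).mp hw, map_neg] at h1
    linarith
  -- orthogonal bases of K and P
  haveI : Invertible (2 : ℝ) := invertibleOfNonzero two_ne_zero
  have hBKsymm : ((killingForm ℝ ↥(fixR σ)).restrict K).IsSymm := by
    refine ⟨fun v w => ?_⟩
    simp only [LinearMap.BilinForm.restrict_apply, RingHom.id_apply]
    exact hsymm _ _
  have hBPsymm : ((killingForm ℝ ↥(fixR σ)).restrict P).IsSymm := by
    refine ⟨fun v w => ?_⟩
    simp only [LinearMap.BilinForm.restrict_apply, RingHom.id_apply]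
    exact hsymm _ _
  obtain ⟨bK, hbK⟩ := LinearMap.BilinForm.exists_orthogonal_basis (LinearMap.BilinForm.isSymm_iff.1 hBKsymm)
  obtain ⟨bP, hbP⟩ := LinearMap.BilinForm.exists_orthogonal_basis (LinearMap.BilinForm.isSymm_iff.1 hBPsymm)
  -- the combined basis
  set eKP := Submodule.prodEquivOfIsCompl K P hcompl with heKP
  set b := ((bK.prod bP).map eKP).reindex finSumFinEquiv with hbdef
  have hbl : ∀ i, b (finSumFinEquiv (Sum.inl i)) = ((bK i : ↥K) : ↥(fixR σ)) := by
    intro i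
    rw [hbdef, Basis.reindex_apply, Equiv.symm_apply_apply, Basis.map_apply, Basis.prod_apply]
    simp [heKP]
  have hbr : ∀ i, b (finSumFinEquiv (Sum.inr i)) = ((bP i : ↥P) : ↥(fixR σ)) := by
    intro i
    rw [hbdef, Basis.reindex_apply, Equiv.symm_apply_apply, Basis.map_apply, Basis.prod_apply]
    simp [heKP]
  -- dimension identities
  obtain ⟨hspanσ, hzeroσ⟩ := span_of_conj σ.toLinearMap hσconj hσ2 (fixRincl σ)
    (fixR_range σ) (fixRincl_injective σ)
  have hdimS2 : finrank ℝ S = 2 * finrank ℝ ↥(fixR σ) := aux_finrank (fixRincl σ) hspanσ hzeroσ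
  have hdimSC : finrank ℝ S = 2 * finrank ℂ S := by
    rw [← Module.finrank_mul_finrank ℝ ℂ S, Complex.finrank_real_complex]
  have hdimG : finrank ℝ ↥(fixR σ) = finrank ℂ S := by omega
  have hdimKP : finrank ℝ ↥K + finrank ℝ ↥P = finrank ℝ ↥(fixR σ) :=
    Submodule.finrank_add_eq_of_isCompl hcompl
  -- the fixed space of θ and its complex dimension
  set F := fixC θ hθc with hFdef
  have memF : ∀ x : S, x ∈ F ↔ θ x = x := fun x => Iff.rfl
  haveI : Module.Finite ℝ ↥F := Module.Finite.trans ℂ ↥F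
  have σmemF : ∀ x : S, x ∈ F → σ x ∈ F := by
    intro x hx
    rw [memF] at hx ⊢
    rw [hcomm, hx]
  set σF : ↥F →ₗ[ℝ] ↥F :=
    { toFun := fun x => ⟨σ (x : S), σmemF _ x.2⟩
      map_add' := fun a b => Subtype.ext (σ.map_add (a : S) (b : S))
      map_smul' := fun r a => Subtype.ext (σ.map_smul r (a : S)) } with hσFdef
  have σF_coe : ∀ x : ↥F, ((σF x : ↥F) : S) = σ (x : S) := fun _ => rfl
  have hσFconj : ∀ (c : ℂ) (x : ↥F), σF (c • x) = (starRingEnd ℂ) c • σF x := by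
    intro c x
    apply Subtype.ext
    rw [σF_coe, show ((c • x : ↥F) : S) = c • (x : S) from rfl, hσconj]
    rfl
  have hσF2 : ∀ x, σF (σF x) = x := fun x => Subtype.ext (by rw [σF_coe, σF_coe, hσ2])
  have KmemF : ∀ v : ↥K, ((v : ↥(fixR σ)) : S) ∈ F := by
    intro v
    rw [memF]
    exact congrArg Subtype.val ((memK _).mp v.2)
  set ιKF : ↥K →ₗ[ℝ] ↥F :=
    { toFun := fun v => ⟨((v : ↥(fixR σ)) : S), KmemF v⟩
      map_add' := fun a b => rfl
      map_smul' := fun r a => rfl } with hιKFdef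
  have ιKF_inj : Function.Injective ιKF := by
    intro a b h
    have h1 : (ιKF a : S) = (ιKF b : S) := congrArg Subtype.val h
    exact Subtype.ext (Subtype.ext h1)
  have ιKF_range : ∀ x : ↥F, (∃ w, ιKF w = x) ↔ σF x = x := by
    intro x
    constructor
    · rintro ⟨w, rfl⟩
      apply Subtype.ext
      rw [σF_coe]
      exact coe_fixR σ (w : ↥(fixR σ))
    · intro h
      have hσx : σ (x : S) = (x : S) := congrArg Subtype.val h
      have hmemK : (⟨(x : S), hσx⟩ : ↥(fixR σ)) ∈ K := by
        rw [memK]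
        apply Subtype.ext
        exact x.2
      exact ⟨⟨⟨(x : S), hσx⟩, hmemK⟩, Subtype.ext rfl⟩
  obtain ⟨hspanF, hzeroF⟩ := span_of_conj σF hσFconj hσF2 ιKF ιKF_range ιKF_inj
  have hdimF2 : finrank ℝ ↥F = 2 * finrank ℝ ↥K := aux_finrank ιKF hspanF hzeroF
  have hdimFC : finrank ℝ ↥F = 2 * finrank ℂ ↥F := by
    rw [← Module.finrank_mul_finrank ℝ ℂ ↥F, Complex.finrank_real_complex]
  have hdimK : finrank ℂ ↥F = finrank ℝ ↥K := by omega
  -- assemble the signature data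
  refine ⟨finrank ℝ ↥K + finrank ℝ ↥P, b, ?_, ?_⟩
  · intro i j hij
    obtain ⟨i', rfl⟩ : ∃ i', finSumFinEquiv i' = i :=
      ⟨finSumFinEquiv.symm i, Equiv.apply_symm_apply _ _⟩
    obtain ⟨j', rfl⟩ : ∃ j', finSumFinEquiv j' = j :=
      ⟨finSumFinEquiv.symm j, Equiv.apply_symm_apply _ _⟩
    have hij' : i' ≠ j' := fun h => hij (by rw [h])
    cases i' with
    | inl ik =>
      cases j' with
      | inl jk =>
        rw [hbl, hbl]
        have hne : ik ≠ jk := fun h => hij' (by rw [h])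
        have := hbK hne
        simpa only [LinearMap.BilinForm.restrict_apply, Function.onFun, LinearMap.domRestrict_apply] using this
      | inr jp =>
        rw [hbl, hbr]
        exact orthKP _ (bK ik).2 _ (bP jp).2
    | inr ip =>
      cases j' with
      | inl jk =>
        rw [hbr, hbl, hsymm]
        exact orthKP _ (bK jk).2 _ (bP ip).2
      | inr jp =>
        rw [hbr, hbr]
        have hne : ip ≠ jp := fun h => hij' (by rw [h])
        have := hbP hne
        simpa only [LinearMap.BilinForm.restrict_apply, Function.onFun, LinearMap.domRestrict_apply] using this
  · have s1 : ∀ ik, Real.sign (killingForm ℝ ↥(fixR σ)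
        (b (finSumFinEquiv (Sum.inl ik))) (b (finSumFinEquiv (Sum.inl ik)))) = -1 := by
      intro ik
      rw [hbl]
      apply Real.sign_of_neg
      apply negK _ (bK ik).2
      intro h
      exact bK.ne_zero ik (Submodule.coe_eq_zero.mp h)
    have s2 : ∀ ip, Real.sign (killingForm ℝ ↥(fixR σ)
        (b (finSumFinEquiv (Sum.inr ip))) (b (finSumFinEquiv (Sum.inr ip)))) = 1 := by
      intro ip
      rw [hbr]
      apply Real.sign_of_pos
      apply posP _ (bP ip).2
      intro h
      exact bP.ne_zero ip (Submodule.coe_eq_zero.mp h)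
    rw [← Equiv.sum_comp finSumFinEquiv
      (fun i => Real.sign (killingForm ℝ ↥(fixR σ) (b i) (b i))), Fintype.sum_sum_type]
    simp only [s1, s2, Finset.sum_const, Finset.card_univ, Fintype.card_fin, nsmul_eq_mul,
      mul_one, mul_neg_one]
    have hc1 : finrank ℂ S = finrank ℝ ↥K + finrank ℝ ↥P := by omega
    rw [hc1, hdimK]
    push_cast
    ring
end
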